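/- arXiv:1607.05929 — 4 statements merged into one kernel-verified Lean document; each statement's English description precedes it below -/
import Mathlib

section
/- Let 0 < γ < 1 and n ≥ 1. Then 0 < 1/(n^γ · Γ(1-γ)) < ∑_{k=0}^{n-1} g_k^γ ≤ 1/n^γ, and moreover ∑_{k=0}^{n-1} g_k^γ = −∑_{k=n}^{∞} g_k^γ, where the tail series converges. -/
/-- Grünwald–Letnikov coefficient `g_k^α = (-1)^k * binom(α,k)`. -/
noncomputable def gl (a : ℝ) (k : ℕ) : ℝ :=
  (-1 : ℝ) ^ k * (∏ j ∈ Finset.range k, (a - j)) / (Nat.factorial k : ℝ)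

/-- Shifted Grünwald weights. -/
noncomputable def glw (a : ℝ) : ℕ → ℝ
  | 0 => a / 2 * gl a 0
  | (k+1) => a / 2 * gl a (k+1) + (2 - a) / 2 * gl a k

/-- Second-order Lubich coefficients `l_m^{2,γ}`. -/
noncomputable def lub2 (g : ℝ) (m : ℕ) : ℝ :=
  (3/2 : ℝ) ^ g * ∑ k ∈ Finset.range (m+1), (1/3 : ℝ) ^ k * gl g k * gl g (m - k)

/-- The Toeplitz matrix `B_α` of size `(M-1) × (M-1)`. -/
noncomputable def Bmat (a : ℝ) (M : ℕ) : Matrix (Fin (M-1)) (Fin (M-1)) ℝ :=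
  fun i j => if (j : ℕ) ≤ (i : ℕ) + 1 then glw a ((i : ℕ) + 1 - (j : ℕ)) else 0

/-- The symmetric matrix `A_α = B_α + B_αᵀ`. -/
noncomputable def Amat (a : ℝ) (M : ℕ) : Matrix (Fin (M-1)) (Fin (M-1)) ℝ :=
  Bmat a M + (Bmat a M).transpose

open Finset Filter Topology Real

noncomputable def glP (γ : ℝ) (m : ℕ) : ℝ :=
  ∏ j ∈ Finset.range m, (((j : ℝ) + 1 - γ) / ((j : ℝ) + 1))

lemma gl_zero (a : ℝ) : gl a 0 = 1 := by simp [gl]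

lemma gl_succ (a : ℝ) (k : ℕ) : gl a (k + 1) = -((a - k) / (k + 1)) * gl a k := by
  have hk : ((k : ℝ) + 1) ≠ 0 := by positivity
  have hf : (Nat.factorial k : ℝ) ≠ 0 := by exact_mod_cast (Nat.factorial_pos k).ne'
  simp only [gl, Finset.prod_range_succ, Nat.factorial_succ, pow_succ]
  push_cast
  field_simp

lemma glP_pos {γ : ℝ} (hγ1 : γ < 1) (m : ℕ) : 0 < glP γ m := by
  apply Finset.prod_pos
  intro j _
  have h1 : (0:ℝ) < (j:ℝ) + 1 := by positivity
  have h2 : (0:ℝ) < (j:ℝ) + 1 - γ := by linarith [Nat.cast_nonneg (α := ℝ) j]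
  positivity

lemma glP_succ (γ : ℝ) (m : ℕ) :
    glP γ (m + 1) = glP γ m * (((m : ℝ) + 1 - γ) / ((m : ℝ) + 1)) := by
  simp [glP, Finset.prod_range_succ, mul_div_mul_comm]

lemma gl_eq (γ : ℝ) (m : ℕ) : gl γ (m + 1) = -(γ / ((m : ℝ) + 1)) * glP γ m := by
  induction m with
  | zero => simp [gl_succ, gl_zero, glP]
  | succ k ih =>
      rw [gl_succ, ih, glP_succ]
      have h1 : ((k : ℝ) + 1) ≠ 0 := by positivity
      have h2 : ((k : ℝ) + 1 + 1) ≠ 0 := by positivity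
      push_cast
      field_simp
      ring

lemma sum_gl (γ : ℝ) (m : ℕ) : ∑ k ∈ Finset.range (m + 1), gl γ k = glP γ m := by
  induction m with
  | zero => simp [gl_zero, glP]
  | succ k ih =>
      rw [Finset.sum_range_succ, ih, gl_eq, glP_succ]
      have h1 : ((k : ℝ) + 1) ≠ 0 := by positivity
      field_simp
      ring

/-- The key strict monotonicity step: `(k+2)^γ ⬝ P_{k+1} < (k+1)^γ ⬝ P_k`. -/
lemma T_step {γ : ℝ} (hγ0 : 0 < γ) (hγ1 : γ < 1) (k : ℕ) :
    ((k:ℝ) + 2) ^ γ * glP γ (k+1) < ((k:ℝ) + 1) ^ γ * glP γ k := by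
  set x : ℝ := (k:ℝ) + 1 with hx
  have hx1 : (1:ℝ) ≤ x := by
    have : (0:ℝ) ≤ (k:ℝ) := Nat.cast_nonneg k
    simp [hx]
  have hx0 : (0:ℝ) < x := lt_of_lt_of_le one_pos hx1
  have hxγ : (0:ℝ) < x - γ := by linarith
  have hP : 0 < glP γ k := glP_pos hγ1 k
  have hxpow : 0 < x ^ γ := Real.rpow_pos_of_pos hx0 γ
  rw [glP_succ]
  have hb : (1 + 1/x) ^ γ < 1 + γ * (1/x) :=
    rpow_one_add_lt_one_add_mul_self
      (by have : (0:ℝ) < 1/x := by positivity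
          linarith) (by positivity : (0:ℝ) < 1/x).ne' hγ0 hγ1
  have hxe : x + 1 = (1 + 1/x) * x := by field_simp
  have h2 : (x + 1) ^ γ = (1 + 1/x) ^ γ * x ^ γ := by
    rw [hxe, Real.mul_rpow (by positivity) hx0.le]
  have h3 : (1 + 1/x) ^ γ * ((x - γ)/x) < 1 := by
    have h4 : (0:ℝ) < (x - γ)/x := by positivity
    calc (1 + 1/x) ^ γ * ((x - γ)/x) < (1 + γ * (1/x)) * ((x - γ)/x) :=
          mul_lt_mul_of_pos_right hb h4
      _ = (x^2 - γ^2) / x^2 := by field_simp; ring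
      _ < 1 := by
          rw [div_lt_one (by positivity)]
          nlinarith
  have hA : (x + 1) ^ γ * ((x - γ)/x) < x ^ γ := by
    calc (x + 1) ^ γ * ((x - γ)/x) = ((1 + 1/x) ^ γ * ((x - γ)/x)) * x ^ γ := by
          rw [h2]; ring
      _ < 1 * x ^ γ := mul_lt_mul_of_pos_right h3 hxpow
      _ = x ^ γ := one_mul _
  have : ((k:ℝ) + 2) = x + 1 := by rw [hx]; ring
  rw [this, hx]
  calc (x + 1) ^ γ * (glP γ k * ((x - γ)/x)) = ((x + 1) ^ γ * ((x - γ)/x)) * glP γ k := by ring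
    _ < x ^ γ * glP γ k := mul_lt_mul_of_pos_right hA hP

noncomputable def glT (γ : ℝ) (n : ℕ) : ℝ := (n : ℝ) ^ γ * glP γ (n - 1)

lemma glT_succ_lt {γ : ℝ} (hγ0 : 0 < γ) (hγ1 : γ < 1) (k : ℕ) :
    glT γ (k + 2) < glT γ (k + 1) := by
  have h := T_step hγ0 hγ1 k
  unfold glT
  have e1 : ((k + 2 : ℕ):ℝ) = (k:ℝ) + 2 := by push_cast; ring
  have e2 : ((k + 1 : ℕ):ℝ) = (k:ℝ) + 1 := by push_cast; ring
  have e3 : k + 2 - 1 = k + 1 := rfl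
  have e4 : k + 1 - 1 = k := rfl
  rw [e3, e4, e1, e2]
  exact h

lemma glT_anti {γ : ℝ} (hγ0 : 0 < γ) (hγ1 : γ < 1) (m : ℕ) :
    ∀ j, glT γ (m + 1 + j) ≤ glT γ (m + 1) := by
  intro j
  induction j with
  | zero => simp
  | succ i ih =>
      have : glT γ (m + 1 + (i + 1)) < glT γ (m + 1 + i) := by
        have := glT_succ_lt hγ0 hγ1 (m + i)
        convert this using 2 <;> omega
      linarith

lemma glT_le_one {γ : ℝ} (hγ0 : 0 < γ) (hγ1 : γ < 1) (m : ℕ) : glT γ (m + 1) ≤ 1 := by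
  have h := glT_anti hγ0 hγ1 0 m
  have h1 : glT γ 1 = 1 := by simp [glT, glP]
  simpa [h1, add_comm] using h

lemma prod_shift_eq (γ : ℝ) (m : ℕ) :
    (∏ j ∈ Finset.range (m+1), ((1 - γ) + (j:ℝ))) = glP γ (m+1) * ((m+1).factorial : ℝ) := by
  have hfac : ((m+1).factorial : ℝ) = ∏ j ∈ Finset.range (m+1), ((j:ℝ) + 1) := by
    rw [← Finset.prod_range_add_one_eq_factorial]
    push_cast
    rfl
  rw [hfac, glP, ← Finset.prod_mul_distrib]
  apply Finset.prod_congr rfl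
  intro j _
  have hj : ((j:ℝ) + 1) ≠ 0 := by positivity
  rw [div_mul_cancel₀ _ hj]
  ring

lemma gammaSeq_mul_glT {γ : ℝ} (hγ1 : γ < 1) (m : ℕ) (hm : 1 ≤ m) :
    Real.GammaSeq (1 - γ) m * glT γ (m + 2) =
      ((m:ℝ) / ((m:ℝ) + 1)) ^ (1 - γ) * (((m:ℝ) + 2) / ((m:ℝ) + 1)) ^ γ := by
  have hm0 : (0:ℝ) < (m:ℝ) := by exact_mod_cast hm
  have hP : 0 < glP γ (m+1) := glP_pos hγ1 (m+1)
  have hfm : (0:ℝ) < (m.factorial : ℝ) := by exact_mod_cast m.factorial_pos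
  have hT : glT γ (m + 2) = ((m:ℝ) + 2) ^ γ * glP γ (m + 1) := by
    unfold glT
    have e : ((m + 2 : ℕ):ℝ) = (m:ℝ) + 2 := by push_cast; ring
    rw [show m + 2 - 1 = m + 1 from rfl, e]
  have h1 : ((m:ℝ) + 1) ^ (1 - γ) * ((m:ℝ) + 1) ^ γ = (m:ℝ) + 1 := by
    rw [← Real.rpow_add (by positivity)]
    simp
  have hfac : (((m+1).factorial : ℝ)) = ((m:ℝ) + 1) * (m.factorial : ℝ) := by
    push_cast [Nat.factorial_succ]
    ring
  rw [Real.GammaSeq, prod_shift_eq, hT, hfac,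
      Real.div_rpow hm0.le (by positivity), Real.div_rpow (by positivity) (by positivity),
      div_mul_div_comm, h1]
  field_simp

lemma glT_tendsto {γ : ℝ} (hγ0 : 0 < γ) (hγ1 : γ < 1) :
    Tendsto (glT γ) atTop (𝓝 (1 / Real.Gamma (1 - γ))) := by
  have hΓ : 0 < Real.Gamma (1 - γ) := Real.Gamma_pos_of_pos (by linarith)
  have hc1 : Tendsto (fun m : ℕ => ((m:ℝ) / ((m:ℝ) + 1)) ^ (1 - γ)) atTop (𝓝 1) := by
    have := (tendsto_natCast_div_add_atTop (1:ℝ)).rpow_const (p := 1 - γ) (Or.inl one_ne_zero)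
    simpa using this
  have hc2 : Tendsto (fun m : ℕ => (((m:ℝ) + 2) / ((m:ℝ) + 1)) ^ γ) atTop (𝓝 1) := by
    have hb : Tendsto (fun m : ℕ => ((m:ℝ) + 2) / ((m:ℝ) + 1)) atTop (𝓝 1) := by
      have h0 : Tendsto (fun m : ℕ => 1 + 1 / ((m:ℝ) + 1)) atTop (𝓝 (1 + 0)) :=
        tendsto_const_nhds.add tendsto_one_div_add_atTop_nhds_zero_nat
      simp only [add_zero] at h0
      apply h0.congr
      intro m
      have : ((m:ℝ) + 1) ≠ 0 := by positivity
      field_simp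
      ring
    have := hb.rpow_const (p := γ) (Or.inl one_ne_zero)
    simpa using this
  have hGS : Tendsto (Real.GammaSeq (1 - γ)) atTop (𝓝 (Real.Gamma (1 - γ))) :=
    Real.GammaSeq_tendsto_Gamma (1 - γ)
  have hdiv : Tendsto
      (fun m : ℕ => ((m:ℝ) / ((m:ℝ) + 1)) ^ (1 - γ) * (((m:ℝ) + 2) / ((m:ℝ) + 1)) ^ γ /
        Real.GammaSeq (1 - γ) m) atTop (𝓝 (1 / Real.Gamma (1 - γ))) := by
    have := ((hc1.mul hc2).div hGS hΓ.ne')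
    simpa [Pi.div_def] using this
  have hshift : Tendsto (fun m : ℕ => glT γ (m + 2)) atTop (𝓝 (1 / Real.Gamma (1 - γ))) := by
    apply hdiv.congr'
    filter_upwards [eventually_ge_atTop 1] with m hm
    have hGSpos : 0 < Real.GammaSeq (1 - γ) m := by
      have hm0 : (0:ℝ) < (m:ℝ) := by exact_mod_cast hm
      rw [Real.GammaSeq]
      apply div_pos
      · exact mul_pos (Real.rpow_pos_of_pos hm0 _) (by exact_mod_cast m.factorial_pos)
      · apply Finset.prod_pos
        intro j _
        have : (0:ℝ) ≤ (j:ℝ) := Nat.cast_nonneg j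
        linarith
    rw [← gammaSeq_mul_glT hγ1 m hm]
    field_simp
  exact (tendsto_add_atTop_iff_nat 2).mp hshift

lemma glT_gt {γ : ℝ} (hγ0 : 0 < γ) (hγ1 : γ < 1) (m : ℕ) :
    1 / Real.Gamma (1 - γ) < glT γ (m + 1) := by
  have hge : 1 / Real.Gamma (1 - γ) ≤ glT γ (m + 2) := by
    apply le_of_tendsto (glT_tendsto hγ0 hγ1)
    filter_upwards [eventually_ge_atTop (m + 2)] with k hk
    obtain ⟨j, rfl⟩ := Nat.exists_eq_add_of_le hk
    have := glT_anti hγ0 hγ1 (m + 1) j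
    convert this using 2
  calc 1 / Real.Gamma (1 - γ) ≤ glT γ (m + 2) := hge
    _ < glT γ (m + 1) := glT_succ_lt hγ0 hγ1 m

theorem stmt1 (γ : ℝ) (hγ0 : 0 < γ) (hγ1 : γ < 1) (n : ℕ) (hn : 1 ≤ n) :
    0 < 1 / ((n : ℝ) ^ γ * Real.Gamma (1 - γ)) ∧
    1 / ((n : ℝ) ^ γ * Real.Gamma (1 - γ)) < ∑ k ∈ Finset.range n, gl γ k ∧
    (∑ k ∈ Finset.range n, gl γ k) ≤ 1 / (n : ℝ) ^ γ ∧
    HasSum (fun j : ℕ => gl γ (n + j)) (-(∑ k ∈ Finset.range n, gl γ k)) := by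
  obtain ⟨p, rfl⟩ : ∃ p, n = p + 1 := ⟨n - 1, by omega⟩
  have hΓ : 0 < Real.Gamma (1 - γ) := Real.Gamma_pos_of_pos (by linarith)
  have hnpos : (0:ℝ) < ((p:ℝ) + 1) := by positivity
  have hnγ : (0:ℝ) < ((p + 1 : ℕ):ℝ) ^ γ := Real.rpow_pos_of_pos (by push_cast; positivity) γ
  have hsum : ∑ k ∈ Finset.range (p + 1), gl γ k = glP γ p := sum_gl γ p
  have hT : glT γ (p + 1) = ((p + 1 : ℕ):ℝ) ^ γ * glP γ p := by
    unfold glT; norm_num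
  refine ⟨by positivity, ?_, ?_, ?_⟩
  · -- lower bound
    have h1 : 1 / Real.Gamma (1 - γ) < ((p + 1 : ℕ):ℝ) ^ γ * glP γ p := by
      rw [← hT]; exact glT_gt hγ0 hγ1 p
    rw [hsum, div_lt_iff₀ (by positivity)]
    rw [div_lt_iff₀ hΓ] at h1
    calc (1:ℝ) < ((p + 1 : ℕ):ℝ) ^ γ * glP γ p * Real.Gamma (1 - γ) := h1
      _ = glP γ p * (((p + 1 : ℕ):ℝ) ^ γ * Real.Gamma (1 - γ)) := by ring
  · -- upper bound
    have h1 : ((p + 1 : ℕ):ℝ) ^ γ * glP γ p ≤ 1 := by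
      rw [← hT]; exact glT_le_one hγ0 hγ1 p
    rw [hsum, le_div_iff₀ hnγ]
    linarith [mul_comm (glP γ p) (((p + 1 : ℕ):ℝ) ^ γ)]
  · -- HasSum
    set S : ℝ := ∑ k ∈ Finset.range (p + 1), gl γ k with hS
    have hpartial : ∀ m : ℕ, ∑ j ∈ Finset.range m, gl γ (p + 1 + j) =
        (∑ k ∈ Finset.range (p + 1 + m), gl γ k) - S := by
      intro m
      rw [Finset.sum_range_add, ← hS]
      ring
    have hsum_pos : ∀ m : ℕ, 0 < ∑ k ∈ Finset.range (m + 1), gl γ k := by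
      intro m
      rw [sum_gl]
      exact glP_pos hγ1 m
    have hsum_le : ∀ m : ℕ, 1 ≤ m → ∑ k ∈ Finset.range m, gl γ k ≤ ((m:ℝ)) ^ (-γ) := by
      intro m hm
      obtain ⟨q, rfl⟩ : ∃ q, m = q + 1 := ⟨m - 1, by omega⟩
      have h1 : ((q + 1 : ℕ):ℝ) ^ γ * glP γ q ≤ 1 := by
        have h := glT_le_one hγ0 hγ1 q
        unfold glT at h
        simpa using h
      have hpow : (0:ℝ) < ((q + 1 : ℕ):ℝ) ^ γ :=
        Real.rpow_pos_of_pos (by push_cast; positivity) γ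
      rw [sum_gl, Real.rpow_neg (Nat.cast_nonneg _), ← one_div, le_div_iff₀ hpow]
      linarith [mul_comm (glP γ q) (((q + 1 : ℕ):ℝ) ^ γ), h1]
    have htail0 : Tendsto (fun m : ℕ => ∑ k ∈ Finset.range m, gl γ k) atTop (𝓝 0) := by
      have hub : Tendsto (fun m : ℕ => ((m:ℝ)) ^ (-γ)) atTop (𝓝 0) :=
        (tendsto_rpow_neg_atTop hγ0).comp tendsto_natCast_atTop_atTop
      apply tendsto_of_tendsto_of_tendsto_of_le_of_le' tendsto_const_nhds hub
      · filter_upwards [eventually_ge_atTop 1] with m hm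
        obtain ⟨q, rfl⟩ : ∃ q, m = q + 1 := ⟨m - 1, by omega⟩
        exact (hsum_pos q).le
      · filter_upwards [eventually_ge_atTop 1] with m hm
        exact hsum_le m hm
    have hneg_summable : Summable (fun j : ℕ => -gl γ (p + 1 + j)) := by
      apply summable_of_sum_range_le (c := S)
      · intro j
        have e : p + 1 + j = (p + j) + 1 := by omega
        have hP := glP_pos hγ1 (p + j)
        have hc : (0:ℝ) ≤ γ / (((p + j : ℕ):ℝ) + 1) := by positivity
        rw [e, gl_eq]
        have : (0:ℝ) ≤ γ / (((p + j : ℕ):ℝ) + 1) * glP γ (p + j) := mul_nonneg hc hP.le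
        linarith
      · intro m
        rw [Finset.sum_neg_distrib, hpartial m]
        have e : p + 1 + m = (p + m) + 1 := by omega
        have h2 : 0 < ∑ k ∈ Finset.range (p + 1 + m), gl γ k := by
          rw [e]; exact hsum_pos (p + m)
        linarith
    have hsummable : Summable (fun j : ℕ => gl γ (p + 1 + j)) := by
      have h := hneg_summable.neg
      simpa using h
    have hts := hsummable.hasSum
    have hlim1 : Tendsto (fun m => ∑ j ∈ Finset.range m, gl γ (p + 1 + j)) atTop
        (𝓝 (∑' j, gl γ (p + 1 + j))) := hts.tendsto_sum_nat
    have hcomp : Tendsto (fun m : ℕ => ∑ k ∈ Finset.range (p + 1 + m), gl γ k) atTop (𝓝 0) := by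
      have h := htail0.comp (tendsto_add_atTop_nat (p + 1))
      apply h.congr
      intro m
      simp [Nat.add_comm]
    have hlim2 : Tendsto (fun m => ∑ j ∈ Finset.range m, gl γ (p + 1 + j)) atTop (𝓝 (-S)) := by
      have h : Tendsto (fun m : ℕ => (∑ k ∈ Finset.range (p + 1 + m), gl γ k) - S) atTop
          (𝓝 (0 - S)) := hcomp.sub tendsto_const_nhds
      rw [zero_sub] at h
      apply h.congr
      intro m
      exact (hpartial m).symm
    have heq : (∑' j, gl γ (p + 1 + j)) = -S := tendsto_nhds_unique hlim1 hlim2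
    exact heq ▸ hts
end

section
/- Let 1 < α < 2. Then the sequence n^α · ∑_{k=0}^{n} g_k^α converges to 1/Γ(1-α) as n → ∞. -/
lemma gl_sum (a : ℝ) (n : ℕ) :
    ∑ k ∈ Finset.range (n+1), gl a k = gl (a-1) n := by
  induction n with
  | zero => simp [gl]
  | succ n ih =>
      rw [Finset.sum_range_succ, ih]
      have hP : ∏ j ∈ Finset.range (n+1), (a - j) = a * ∏ j ∈ Finset.range n, (a - 1 - j) := by
        rw [Finset.prod_range_succ']
        simp only [Nat.cast_zero, sub_zero]
        rw [mul_comm]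
        congr 1
        apply Finset.prod_congr rfl
        intro j _
        push_cast
        ring
      have hQ : ∏ j ∈ Finset.range (n+1), (a - 1 - j) =
          (∏ j ∈ Finset.range n, (a - 1 - j)) * (a - 1 - n) := Finset.prod_range_succ _ _
      simp only [gl, hP, hQ, Nat.factorial_succ, Nat.cast_mul, pow_succ]
      have hf : (Nat.factorial n : ℝ) ≠ 0 := Nat.cast_ne_zero.mpr (Nat.factorial_ne_zero n)
      have hn1 : ((n:ℝ)+1) ≠ 0 := by positivity
      field_simp
      push_cast
      ring

lemma gl_eq_s6 (a : ℝ) (n : ℕ) :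
    gl (a-1) n = (∏ j ∈ Finset.range n, ((1-a) + j)) / (Nat.factorial n : ℝ) := by
  unfold gl
  congr 1
  have h : ∀ j ∈ Finset.range n, (1-a) + (j:ℝ) = -1 * (a - 1 - j) := by
    intro j _; ring
  rw [Finset.prod_congr rfl h, Finset.prod_mul_distrib, Finset.prod_const, Finset.card_range]

theorem stmt6 (α : ℝ) (hα1 : 1 < α) (hα2 : α < 2) :
    Filter.Tendsto (fun n : ℕ => (n : ℝ) ^ α * ∑ k ∈ Finset.range (n+1), gl α k)
      Filter.atTop (nhds (1 / Real.Gamma (1 - α))) := by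
  set s : ℝ := 1 - α with hs
  have hs0 : s < 0 := by simp [hs]; linarith
  have hs1 : -1 < s := by simp [hs]; linarith
  have hΓ : Real.Gamma s ≠ 0 := by
    apply Real.Gamma_ne_zero
    intro m
    match m with
    | 0 => simp; linarith
    | (m+1) =>
        have : (-(((m:ℝ)+1))) ≤ -1 := by
          have : (0:ℝ) ≤ m := Nat.cast_nonneg m
          linarith
        push_cast
        intro h
        rw [h] at hs1
        linarith
  -- target limit function
  have key : Filter.Tendsto (fun n : ℕ => ((n:ℝ) / (s + n)) * (Real.GammaSeq s n)⁻¹)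
      Filter.atTop (nhds (1 * (Real.Gamma s)⁻¹)) := by
    apply Filter.Tendsto.mul
    · have h1 : Filter.Tendsto (fun n : ℕ => s / (n:ℝ) + 1) Filter.atTop (nhds 1) := by
        have := tendsto_const_div_atTop_nhds_zero_nat s
        simpa using this.add_const 1
      have h2 : Filter.Tendsto (fun n : ℕ => (s / (n:ℝ) + 1)⁻¹) Filter.atTop (nhds 1) := by
        simpa using h1.inv₀ one_ne_zero
      apply h2.congr'
      filter_upwards [Filter.eventually_atTop.mpr ⟨1, fun n hn => hn⟩] with n hn
      have hn0 : (0:ℝ) < n := by exact_mod_cast hn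
      have hsn : s + n ≠ 0 := by
        have : (1:ℝ) ≤ n := by exact_mod_cast hn
        linarith
      field_simp
    · exact (Real.GammaSeq_tendsto_Gamma s).inv₀ hΓ
  rw [show (1 : ℝ) / Real.Gamma (1-α) = 1 * (Real.Gamma s)⁻¹ by rw [hs]; ring]
  apply key.congr'
  filter_upwards [Filter.eventually_atTop.mpr ⟨1, fun n hn => hn⟩] with n hn
  have hn0 : (0:ℝ) < n := by exact_mod_cast hn
  have hsn : s + n ≠ 0 := by
    have : (1:ℝ) ≤ n := by exact_mod_cast hn
    linarith
  have hf : (Nat.factorial n : ℝ) ≠ 0 := Nat.cast_ne_zero.mpr (Nat.factorial_ne_zero n)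
  have hns : (0:ℝ) < (n:ℝ) ^ s := Real.rpow_pos_of_pos hn0 s
  rw [gl_sum, gl_eq_s6, ← hs]
  rw [Real.GammaSeq, inv_div]
  rw [Finset.prod_range_succ]
  have hα : (n:ℝ) ^ α = (n:ℝ) / (n:ℝ) ^ s := by
    rw [eq_div_iff hns.ne', ← Real.rpow_add hn0,
      show α + s = 1 by rw [hs]; ring, Real.rpow_one]
  rw [hα]
  field_simp
end

section
/- Let 1 < α < 2. Then the shifted Grünwald weights satisfy: w_0^α > 0; w_1^α < 0; w_0^α + w_2^α > 0; and w_k^α > 0 for every k ≥ 3. -/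
theorem stmt7 (α : ℝ) (hα1 : 1 < α) (hα2 : α < 2) :
    0 < glw α 0 ∧ glw α 1 < 0 ∧ 0 < glw α 0 + glw α 2 ∧
    ∀ k : ℕ, 3 ≤ k → 0 < glw α k := by
  have hstep : ∀ k : ℕ, gl α (k+1) = gl α k * (((k : ℝ) - α) / (k + 1)) := by
    intro k
    have hk : (Nat.factorial k : ℝ) ≠ 0 := by positivity
    have hk1 : ((k : ℝ) + 1) ≠ 0 := by positivity
    simp only [gl, Finset.prod_range_succ, Nat.factorial_succ, pow_succ]
    push_cast
    field_simp
    ring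
  have hglpos : ∀ k : ℕ, 2 ≤ k → 0 < gl α k := by
    intro k hk
    induction k, hk using Nat.le_induction with
    | base =>
      have : gl α 2 = α * (α - 1) / 2 := by
        simp [gl, Finset.prod_range_succ, Nat.factorial]
      rw [this]; nlinarith
    | succ n hn ih =>
      rw [hstep]
      have h1 : (0:ℝ) < (n : ℝ) - α := by
        have : (2:ℝ) ≤ (n:ℝ) := by exact_mod_cast hn
        linarith
      have h2 : (0:ℝ) < (n : ℝ) + 1 := by positivity
      positivity
  refine ⟨?_, ?_, ?_, ?_⟩
  · simp only [glw, gl]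
    simp
    linarith
  · have : glw α 1 = α / 2 * (-α) + (2 - α) / 2 * 1 := by
      simp [glw, gl, Finset.prod_range_succ, Nat.factorial]
    rw [this]; nlinarith
  · have h0 : glw α 0 = α / 2 := by simp [glw, gl]
    have h2 : glw α 2 = α / 2 * (α * (α - 1) / 2) + (2 - α) / 2 * (-α) := by
      simp [glw, gl, Finset.prod_range_succ, Nat.factorial]
    rw [h0, h2]
    nlinarith [mul_pos (mul_pos (show (0:ℝ) < α by linarith) (show (0:ℝ) < α - 1 by linarith)) (show (0:ℝ) < α + 2 by linarith)]
  · intro k hk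
    obtain ⟨m, rfl⟩ : ∃ m, k = m + 1 := ⟨k - 1, by omega⟩
    have hm : 2 ≤ m := by omega
    have h1 := hglpos (m+1) (by omega)
    have h2 := hglpos m hm
    show 0 < α / 2 * gl α (m+1) + (2 - α) / 2 * gl α m
    have : 0 < α / 2 * gl α (m+1) := by positivity
    nlinarith
end

section
/- Let 7/8 ≤ γ < 1 and z ∈ [0,π]. Then ∑_{k=1}^{3} l_k^{2,γ} · (cos(k·z) − 1) ≥ 0. -/
theorem stmt13 (γ : ℝ) (h1 : 7/8 ≤ γ) (h2 : γ < 1) (z : ℝ)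
    (hz : z ∈ Set.Icc 0 Real.pi) :
    0 ≤ ∑ k ∈ Finset.Icc 1 3, lub2 γ k * (Real.cos ((k : ℝ) * z) - 1) := by
  have hP : (0:ℝ) < (3/2 : ℝ) ^ γ := Real.rpow_pos_of_pos (by norm_num) γ
  set c := Real.cos z with hc
  have hc1 : c ≤ 1 := Real.cos_le_one z
  have hc2 : -1 ≤ c := Real.neg_one_le_cos z
  have e2 : Real.cos ((2:ℝ) * z) = 2 * c ^ 2 - 1 := Real.cos_two_mul z
  have e3 : Real.cos ((3:ℝ) * z) = 4 * c ^ 3 - 3 * c := Real.cos_three_mul z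
  have hsum : ∑ k ∈ Finset.Icc 1 3, lub2 γ k * (Real.cos ((k : ℝ) * z) - 1)
      = (3/2 : ℝ) ^ γ * (γ * ((1 - c) *
        (4/3 - 2*(8*γ-5)*(c+1)/9 - 4*(γ-1)*(7-8*γ)*(2*c+1)^2/81))) := by
    rw [show (Finset.Icc 1 3 : Finset ℕ) = {1, 2, 3} from rfl]
    rw [Finset.sum_insert (by decide), Finset.sum_insert (by decide), Finset.sum_singleton]
    push_cast
    rw [e2, e3, one_mul]
    simp only [lub2, gl, Finset.sum_range_succ, Finset.prod_range_succ, Finset.sum_range_zero,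
      Finset.prod_range_zero]
    norm_num [Nat.factorial]
    ring
  rw [hsum]
  have hγ : (0:ℝ) < γ := by linarith
  have h1c : (0:ℝ) ≤ 1 - c := by linarith
  have hpc : (0:ℝ) ≤ 1 + c := by linarith
  have hgg : (0:ℝ) ≤ (1-γ)*(8*γ-7) := mul_nonneg (by linarith) (by linarith)
  have hB1 : (0:ℝ) ≤ 4/3 - 4*(1-γ)*(8*γ-7)/81 := by nlinarith [sq_nonneg (16*γ-15)]
  have hB2 : (0:ℝ) ≤ 4*(8*γ-15)*(γ-1)/9 := by
    nlinarith [mul_nonneg (by linarith : (0:ℝ) ≤ 15-8*γ) (by linarith : (0:ℝ) ≤ 1-γ)]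
  have key : 0 ≤ (1 - c) * (4/3 - 2*(8*γ-5)*(c+1)/9 - 4*(γ-1)*(7-8*γ)*(2*c+1)^2/81) := by
    nlinarith [mul_nonneg (mul_nonneg (mul_nonneg h1c h1c) hpc) hgg,
      mul_nonneg (mul_nonneg h1c h1c) hB1, mul_nonneg (mul_nonneg h1c hpc) hB2]
  positivity
end
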